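/- For a MAG(1)-copula time series V_t = h_θ^{-1}(w_t, w_{t-1}) with w_t iid standard uniform, the joint distribution function of consecutive variables is F_{V_t, V_{t-1}}(a,b) = ∫₀¹ C_θ(a, h_θ(b, v)) dv for a,b ∈ (0,1), and in particular this joint distribution does not depend on t. -/

import Mathlib

open MeasureTheory ProbabilityTheory Set

/-- A bivariate copula. -/
structure BivCopula where
  C : ℝ → ℝ → ℝ
  grounded_left : ∀ u ∈ Icc (0:ℝ) 1, C 0 u = 0
  grounded_right : ∀ u ∈ Icc (0:ℝ) 1, C u 0 = 0
  margin_left : ∀ u ∈ Icc (0:ℝ) 1, C u 1 = u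
  margin_right : ∀ u ∈ Icc (0:ℝ) 1, C 1 u = u
  twoIncreasing : ∀ a b c d : ℝ, a ≤ b → c ≤ d →
    0 ≤ C b d - C a d - C b c + C a c

namespace Stmt8Aux

lemma monoC (K : BivCopula) {a : ℝ} (ha : a ∈ Icc (0:ℝ) 1) {c d : ℝ}
    (hc : 0 ≤ c) (hcd : c ≤ d) (hd : d ≤ 1) : K.C a c ≤ K.C a d := by
  have h := K.twoIncreasing 0 a c d ha.1 hcd
  have h1 := K.grounded_left c ⟨hc, le_trans hcd hd⟩
  have h2 := K.grounded_left d ⟨le_trans hc hcd, hd⟩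
  linarith

lemma lipC (K : BivCopula) {a : ℝ} (ha : a ∈ Icc (0:ℝ) 1) {c d : ℝ}
    (hc : 0 ≤ c) (hcd : c ≤ d) (hd : d ≤ 1) : K.C a d - K.C a c ≤ d - c := by
  have h := K.twoIncreasing a 1 c d ha.2 hcd
  have h1 := K.margin_right c ⟨hc, le_trans hcd hd⟩
  have h2 := K.margin_right d ⟨le_trans hc hcd, hd⟩
  linarith

lemma contC (K : BivCopula) {a : ℝ} (ha : a ∈ Icc (0:ℝ) 1) :
    ContinuousOn (K.C a) (Icc 0 1) := by
  have : LipschitzOnWith 1 (K.C a) (Icc 0 1) := by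
    apply LipschitzOnWith.of_dist_le_mul
    intro x hx y hy
    rw [Real.dist_eq, Real.dist_eq, NNReal.coe_one, one_mul]
    rcases le_total x y with h | h
    · have h1 := monoC K ha hx.1 h hy.2
      have h2 := lipC K ha hx.1 h hy.2
      rw [abs_sub_comm (K.C a x), abs_of_nonneg (sub_nonneg.2 h1), abs_sub_comm x y,
        abs_of_nonneg (sub_nonneg.2 h)]
      linarith
    · have h1 := monoC K ha hy.1 h hx.2
      have h2 := lipC K ha hy.1 h hx.2
      rw [abs_of_nonneg (sub_nonneg.2 h1), abs_of_nonneg (sub_nonneg.2 h)]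
      linarith
  exact this.continuousOn

lemma derivBound (K : BivCopula) {a y d : ℝ} (ha : a ∈ Icc (0:ℝ) 1)
    (hy : y ∈ Ioo (0:ℝ) 1) (hd : HasDerivAt (fun v => K.C a v) d y) :
    d ∈ Icc (0:ℝ) 1 := by
  rw [hasDerivAt_iff_tendsto_slope] at hd
  have hne : nhdsWithin y (Ioi y) ≤ nhdsWithin y {y}ᶜ :=
    nhdsWithin_mono y fun z hz => ne_of_gt hz
  have hd' := hd.mono_left hne
  have hmem : Ioo y 1 ∈ nhdsWithin y (Ioi y) :=
    Ioo_mem_nhdsGT_of_mem ⟨le_refl y, hy.2⟩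
  constructor
  · refine ge_of_tendsto hd' (Filter.eventually_of_mem hmem fun z hz => ?_)
    have hm := monoC K ha hy.1.le hz.1.le hz.2.le
    rw [slope_def_field]
    exact div_nonneg (by linarith) (by linarith [hz.1])
  · refine le_of_tendsto hd' (Filter.eventually_of_mem hmem fun z hz => ?_)
    have hl := lipC K ha hy.1.le hz.1.le hz.2.le
    rw [slope_def_field, div_le_one (by linarith [hz.1] : (0:ℝ) < z - y)]
    linarith

end Stmt8Aux

open Stmt8Aux

/-- for a MAG(1)-copula time series `V_t = h_θ⁻¹(w_t, w_{t-1})` with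
`w_t` iid standard uniform, the joint distribution function of consecutive
variables is `F_{V_t, V_{t-1}}(a,b) = ∫₀¹ C_θ(a, h_θ(b, v)) dv` for
`a, b ∈ (0,1)`; in particular the joint distribution does not depend on `t`. -/
theorem stmt8
    {Ω : Type*} [MeasurableSpace Ω] (μ : Measure Ω) [IsProbabilityMeasure μ]
    (w : ℤ → Ω → ℝ) (hwmeas : ∀ t, Measurable (w t))
    (hwiid : iIndepFun w μ)
    (hwunif : ∀ t, Measure.map (w t) μ = volume.restrict (Ioo (0:ℝ) 1))
    (K : BivCopula) (hθ : ℝ → ℝ → ℝ)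
    (hdef : ∀ u1 ∈ Ioo (0:ℝ) 1, ∀ u2 ∈ Ioo (0:ℝ) 1,
      HasDerivAt (fun v => K.C u1 v) (hθ u1 u2) u2)
    (hmono : ∀ u2 ∈ Ioo (0:ℝ) 1, StrictMonoOn (fun u1 => hθ u1 u2) (Ioo 0 1))
    (hθinv : ℝ → ℝ → ℝ)
    (hinv_mem : ∀ u1 ∈ Ioo (0:ℝ) 1, ∀ u2 ∈ Ioo (0:ℝ) 1, hθinv u1 u2 ∈ Ioo (0:ℝ) 1)
    (hinv_right : ∀ u1 ∈ Ioo (0:ℝ) 1, ∀ u2 ∈ Ioo (0:ℝ) 1, hθ (hθinv u1 u2) u2 = u1)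
    (hinv_left : ∀ u1 ∈ Ioo (0:ℝ) 1, ∀ u2 ∈ Ioo (0:ℝ) 1, hθinv (hθ u1 u2) u2 = u1)
    (V : ℤ → Ω → ℝ)
    (hV : ∀ t : ℤ, ∀ ω : Ω, V t ω = hθinv (w t ω) (w (t - 1) ω)) :
    (∀ t : ℤ, ∀ a ∈ Ioo (0:ℝ) 1, ∀ b ∈ Ioo (0:ℝ) 1,
      (μ {ω | V t ω ≤ a ∧ V (t - 1) ω ≤ b}).toReal
        = ∫ v in (0:ℝ)..1, K.C a (hθ b v)) ∧
    (∀ s t : ℤ, ∀ a b : ℝ,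
      μ {ω | V t ω ≤ a ∧ V (t - 1) ω ≤ b}
        = μ {ω | V s ω ≤ a ∧ V (s - 1) ω ≤ b}) := by
  classical
  set π : Measure ℝ := volume.restrict (Ioo 0 1) with hπ
  have hIoo : MeasurableSet (Ioo (0:ℝ) 1) := measurableSet_Ioo
  have hG : ∀ a ∈ Ioo (0:ℝ) 1, ∀ y ∈ Ioo (0:ℝ) 1, deriv (K.C a) y = hθ a y :=
    fun a ha y hy => (hdef a ha y hy).deriv
  have hGmeas : ∀ a : ℝ, Measurable (deriv (K.C a)) := fun a => measurable_deriv _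
  have hθmem : ∀ a ∈ Ioo (0:ℝ) 1, ∀ y ∈ Ioo (0:ℝ) 1, hθ a y ∈ Icc (0:ℝ) 1 :=
    fun a ha y hy => derivBound K (Ioo_subset_Icc_self ha) hy (hdef a ha y hy)
  -- the measurable test sets
  set Q : ℝ → Set (ℝ × ℝ) := fun a =>
    if a ≤ 0 then ∅ else if 1 ≤ a then Set.univ
      else {p : ℝ × ℝ | p.1 ≤ deriv (K.C a) p.2} with hQdef
  have hQmeas : ∀ a, MeasurableSet (Q a) := by
    intro a
    rw [hQdef]
    dsimp only
    split_ifs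
    · exact MeasurableSet.empty
    · exact MeasurableSet.univ
    · exact measurableSet_le measurable_fst ((hGmeas a).comp measurable_snd)
  have hQiff : ∀ (a : ℝ), ∀ x ∈ Ioo (0:ℝ) 1, ∀ y ∈ Ioo (0:ℝ) 1,
      (hθinv x y ≤ a ↔ (x, y) ∈ Q a) := by
    intro a x hx y hy
    have hm := hinv_mem x hx y hy
    rw [hQdef]
    dsimp only
    split_ifs with h0 h1
    · simp only [mem_empty_iff_false, iff_false, not_le]
      exact lt_of_le_of_lt h0 hm.1
    · simp only [mem_univ, iff_true]
      exact le_trans hm.2.le h1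
    · push_neg at h0 h1
      have haa : a ∈ Ioo (0:ℝ) 1 := ⟨h0, h1⟩
      simp only [mem_setOf_eq]
      rw [hG a haa y hy]
      constructor
      · intro h
        calc x = hθ (hθinv x y) y := (hinv_right x hx y hy).symm
          _ ≤ hθ a y := by
              have := (hmono y hy).monotoneOn hm haa h
              exact this
      · intro h
        by_contra hc
        push_neg at hc
        have hlt : hθ a y < hθ (hθinv x y) y := hmono y hy haa hm hc
        rw [hinv_right x hx y hy] at hlt
        exact absurd h (not_le.mpr hlt)
  -- the joint law of three consecutive innovations
  have hT : ∀ t : ℤ, Measurable (fun ω => (w (t-2) ω, (w (t-1) ω, w t ω))) :=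
    fun t => (hwmeas _).prodMk ((hwmeas _).prodMk (hwmeas _))
  have hlaw : ∀ t : ℤ, Measure.map (fun ω => (w (t-2) ω, (w (t-1) ω, w t ω))) μ
      = π.prod (π.prod π) := by
    intro t
    have hpair : IndepFun (w (t-1)) (w t) μ := hwiid.indepFun (by omega)
    have h1 : Measure.map (fun ω => (w (t-1) ω, w t ω)) μ = π.prod π := by
      rw [(indepFun_iff_map_prod_eq_prod_map_map (hwmeas _).aemeasurable
        (hwmeas _).aemeasurable).mp hpair, hwunif (t-1), hwunif t]
    have h0 : IndepFun (w (t-2)) (fun ω => (w (t-1) ω, w t ω)) μ :=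
      (hwiid.indepFun_prodMk hwmeas (t-1) t (t-2) (by omega) (by omega)).symm
    rw [(indepFun_iff_map_prod_eq_prod_map_map (hwmeas _).aemeasurable
      ((hwmeas _).prodMk (hwmeas _)).aemeasurable).mp h0, h1, hwunif]
  have hae : ∀ s : ℤ, μ {ω | w s ω ∉ Ioo (0:ℝ) 1} = 0 := by
    intro s
    have h : μ (w s ⁻¹' (Ioo (0:ℝ) 1)ᶜ) = 0 := by
      rw [← Measure.map_apply (hwmeas s) hIoo.compl, hwunif s,
        Measure.restrict_apply hIoo.compl]
      simp
    exact h
  -- the key identity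
  have key : ∀ t : ℤ, ∀ a b : ℝ,
      μ {ω | V t ω ≤ a ∧ V (t-1) ω ≤ b}
        = (π.prod (π.prod π)) ((Ioo 0 1 ×ˢ (Ioo 0 1 ×ˢ Ioo 0 1)) ∩
            {p : ℝ × ℝ × ℝ | (p.2.2, p.2.1) ∈ Q a ∧ (p.2.1, p.1) ∈ Q b}) := by
    intro t a b
    set E := {ω | V t ω ≤ a ∧ V (t-1) ω ≤ b} with hE
    set F := {ω | w t ω ∈ Ioo (0:ℝ) 1 ∧ w (t-1) ω ∈ Ioo (0:ℝ) 1
      ∧ w (t-2) ω ∈ Ioo (0:ℝ) 1} with hF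
    set M := (Ioo (0:ℝ) 1 ×ˢ (Ioo (0:ℝ) 1 ×ˢ Ioo (0:ℝ) 1)) ∩
      {p : ℝ × ℝ × ℝ | (p.2.2, p.2.1) ∈ Q a ∧ (p.2.1, p.1) ∈ Q b} with hM
    have hMmeas : MeasurableSet M := by
      apply (hIoo.prod (hIoo.prod hIoo)).inter
      rw [Set.setOf_and]
      exact ((measurable_snd.snd.prodMk measurable_snd.fst) (hQmeas a)).inter
        ((measurable_snd.fst.prodMk measurable_fst) (hQmeas b))
    have ht2 : t - 1 - 1 = t - 2 := by ring
    have hEF : E ∩ F = (fun ω => (w (t-2) ω, (w (t-1) ω, w t ω))) ⁻¹' M := by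
      ext ω
      have hV1 : V (t-1) ω = hθinv (w (t-1) ω) (w (t-2) ω) := by
        rw [hV (t-1) ω, ht2]
      simp only [hE, hM, mem_inter_iff, mem_setOf_eq, mem_preimage, mem_prod, hF]
      constructor
      · rintro ⟨⟨h1, h2⟩, hwt, hwt1, hwt2⟩
        refine ⟨⟨hwt2, hwt1, hwt⟩, ?_, ?_⟩
        · exact (hQiff a _ hwt _ hwt1).mp (by rwa [← hV t ω])
        · exact (hQiff b _ hwt1 _ hwt2).mp (by rwa [← hV1])
      · rintro ⟨⟨hwt2, hwt1, hwt⟩, h1, h2⟩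
        refine ⟨⟨?_, ?_⟩, hwt, hwt1, hwt2⟩
        · rw [hV t ω]
          exact (hQiff a _ hwt _ hwt1).mpr h1
        · rw [hV1]
          exact (hQiff b _ hwt1 _ hwt2).mpr h2
    have hFc : μ Fᶜ = 0 := by
      have hsub : Fᶜ ⊆ {ω | w t ω ∉ Ioo (0:ℝ) 1} ∪ ({ω | w (t-1) ω ∉ Ioo (0:ℝ) 1}
          ∪ {ω | w (t-2) ω ∉ Ioo (0:ℝ) 1}) := by
        intro ω hω
        by_contra hc
        simp only [mem_union, mem_setOf_eq, not_or, not_not] at hc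
        exact hω ⟨hc.1, hc.2.1, hc.2.2⟩
      exact measure_mono_null hsub (measure_union_null (hae t)
        (measure_union_null (hae (t-1)) (hae (t-2))))
    have hμEF : μ E = μ (E ∩ F) := by
      refine le_antisymm ?_ (measure_mono inter_subset_left)
      calc μ E ≤ μ ((E ∩ F) ∪ Fᶜ) := measure_mono (fun ω hω => by
            by_cases h : ω ∈ F
            · exact Or.inl ⟨hω, h⟩
            · exact Or.inr h)
        _ ≤ μ (E ∩ F) + μ Fᶜ := measure_union_le _ _
        _ = μ (E ∩ F) := by rw [hFc, add_zero]
    rw [hμEF, hEF, ← Measure.map_apply (hT t) hMmeas, hlaw t]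
  -- basic integral facts
  have h1ne : ∀ᵐ y : ℝ ∂volume, y ≠ (1:ℝ) := by
    refine ae_iff.mpr ?_
    simp only [not_not, setOf_eq_eq_singleton, measure_singleton]
  have hIic : ∀ c ∈ Icc (0:ℝ) 1, π (Iic c) = ENNReal.ofReal c := by
    intro c hc
    rw [hπ, Measure.restrict_apply measurableSet_Iic]
    refine le_antisymm ?_ ?_
    · calc volume (Iic c ∩ Ioo 0 1) ≤ volume (Ioc 0 c) :=
            measure_mono (fun x hx => ⟨hx.2.1, hx.1⟩)
        _ = ENNReal.ofReal c := by rw [Real.volume_Ioc, sub_zero]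
    · calc ENNReal.ofReal c = volume (Ioo 0 c) := by rw [Real.volume_Ioo, sub_zero]
        _ ≤ volume (Iic c ∩ Ioo 0 1) :=
            measure_mono (fun x hx => ⟨hx.2.le, hx.1, lt_of_lt_of_le hx.2 hc.2⟩)
  have hGint : ∀ u ∈ Ioo (0:ℝ) 1, ∀ c ∈ Icc (0:ℝ) 1,
      IntegrableOn (deriv (K.C u)) (Ioc 0 c) volume := by
    intro u hu c hc
    haveI : IsFiniteMeasure (volume.restrict (Ioc (0:ℝ) c)) :=
      ⟨by rw [Measure.restrict_apply_univ]; exact measure_Ioc_lt_top⟩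
    refine ⟨(hGmeas u).aestronglyMeasurable, ?_⟩
    apply HasFiniteIntegral.of_bounded (C := 1)
    filter_upwards [ae_restrict_mem measurableSet_Ioc, ae_restrict_of_ae h1ne] with y hy hy1
    have hyI : y ∈ Ioo (0:ℝ) 1 := ⟨hy.1, lt_of_le_of_ne (le_trans hy.2 hc.2) hy1⟩
    rw [Real.norm_eq_abs, hG u hu y hyI, abs_le]
    have hmem := hθmem u hu y hyI
    exact ⟨by linarith [hmem.1], hmem.2⟩
  have hnnIoc : ∀ u ∈ Ioo (0:ℝ) 1, ∀ c ∈ Icc (0:ℝ) 1,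
      0 ≤ᵐ[volume.restrict (Ioc (0:ℝ) c)] deriv (K.C u) := by
    intro u hu c hc
    filter_upwards [ae_restrict_mem measurableSet_Ioc, ae_restrict_of_ae h1ne] with y hy hy1
    have hyI : y ∈ Ioo (0:ℝ) 1 := ⟨hy.1, lt_of_le_of_ne (le_trans hy.2 hc.2) hy1⟩
    rw [hG u hu y hyI]
    exact (hθmem u hu y hyI).1
  have hFTC : ∀ u ∈ Ioo (0:ℝ) 1, ∀ c ∈ Icc (0:ℝ) 1,
      ∫ y in (0:ℝ)..c, deriv (K.C u) y = K.C u c := by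
    intro u hu c hc
    have hres := intervalIntegral.integral_eq_sub_of_hasDeriv_right_of_le hc.1
      ((contC K (Ioo_subset_Icc_self hu)).mono (Icc_subset_Icc le_rfl hc.2))
      (fun x hx => by
        have hxI : x ∈ Ioo (0:ℝ) 1 := ⟨hx.1, lt_of_lt_of_le hx.2 hc.2⟩
        have h := (hdef u hu x hxI).hasDerivWithinAt (s := Ioi x)
        rw [hG u hu x hxI]
        exact h)
      ((intervalIntegrable_iff_integrableOn_Ioc_of_le hc.1).mpr (hGint u hu c hc))
    rw [hres, K.grounded_right u (Ioo_subset_Icc_self hu), sub_zero]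
  have hinner : ∀ u ∈ Ioo (0:ℝ) 1, ∀ c ∈ Icc (0:ℝ) 1,
      ∫⁻ y in Iic c, ENNReal.ofReal (deriv (K.C u) y) ∂π = ENNReal.ofReal (K.C u c) := by
    intro u hu c hc
    have hset : (Iic c ∩ Ioo 0 1 : Set ℝ) =ᵐ[volume] Ioc 0 c := by
      rw [ae_eq_set]
      constructor
      · refine measure_mono_null (fun x hx => ?_) (measure_empty (μ := volume))
        exact absurd ⟨hx.1.2.1, hx.1.1⟩ hx.2
      · refine measure_mono_null (t := {(1:ℝ)}) (fun x hx => ?_) (measure_singleton 1)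
        have hx1 : 0 < x ∧ x ≤ c := hx.1
        have hx2 := hx.2
        have hge : (1:ℝ) ≤ x := by
          by_contra hlt
          push_neg at hlt
          exact hx2 ⟨hx1.2, hx1.1, hlt⟩
        simp [le_antisymm (le_trans hx1.2 hc.2) hge]
    rw [hπ, Measure.restrict_restrict measurableSet_Iic, Measure.restrict_congr_set hset,
      ← ofReal_integral_eq_lintegral_ofReal (hGint u hu c hc) (hnnIoc u hu c hc),
      ← intervalIntegral.integral_of_le hc.1, hFTC u hu c hc]
  constructor
  · intro t a ha b hb
    have haI : a ∈ Icc (0:ℝ) 1 := Ioo_subset_Icc_self ha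
    have hbI : b ∈ Icc (0:ℝ) 1 := Ioo_subset_Icc_self hb
    have hQa : Q a = {p : ℝ × ℝ | p.1 ≤ deriv (K.C a) p.2} := by
      rw [hQdef]; dsimp only; rw [if_neg (not_le.mpr ha.1), if_neg (not_le.mpr ha.2)]
    have hQb : Q b = {p : ℝ × ℝ | p.1 ≤ deriv (K.C b) p.2} := by
      rw [hQdef]; dsimp only; rw [if_neg (not_le.mpr hb.1), if_neg (not_le.mpr hb.2)]
    set ψ : ℝ → ℝ := fun z => K.C a (min 1 (max 0 (deriv (K.C b) z))) with hψdef
    have hclamp : ∀ v : ℝ, min 1 (max 0 v) ∈ Icc (0:ℝ) 1 :=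
      fun v => ⟨le_min zero_le_one (le_max_left 0 v), min_le_left 1 _⟩
    have hCm : Monotone (fun v : ℝ => K.C a (min 1 (max 0 v))) := by
      intro v v' hv
      exact monoC K haI (hclamp v).1
        (min_le_min le_rfl (max_le_max le_rfl hv)) (hclamp v').2
    have hψmeas : Measurable ψ := hCm.measurable.comp (hGmeas b)
    have hψeq : ∀ z ∈ Ioo (0:ℝ) 1, ψ z = K.C a (hθ b z) := by
      intro z hz
      have hm := hθmem b hb z hz
      rw [hψdef]
      dsimp only
      rw [hG b hb z hz, max_eq_right hm.1, min_eq_right hm.2]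
    have hψnn : ∀ z, 0 ≤ ψ z := by
      intro z
      have h0 : K.C a 0 = 0 := K.grounded_right a haI
      calc (0:ℝ) = K.C a 0 := h0.symm
        _ ≤ ψ z := monoC K haI le_rfl (hclamp _).1 (hclamp _).2
    have hψle : ∀ z, ψ z ≤ 1 := by
      intro z
      calc ψ z ≤ K.C a 1 := monoC K haI (hclamp _).1 (hclamp _).2 le_rfl
        _ = a := K.margin_left a haI
        _ ≤ 1 := haI.2
    have haeπ : ∀ᵐ z ∂π, z ∈ Ioo (0:ℝ) 1 := by rw [hπ]; exact ae_restrict_mem hIoo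
    rw [key t a b, hQa, hQb]
    simp only [mem_setOf_eq]
    have hM1 : MeasurableSet ((Ioo (0:ℝ) 1 ×ˢ (Ioo (0:ℝ) 1 ×ˢ Ioo (0:ℝ) 1)) ∩
        {p : ℝ × ℝ × ℝ | p.2.2 ≤ deriv (K.C a) p.2.1 ∧ p.2.1 ≤ deriv (K.C b) p.1}) := by
      apply (hIoo.prod (hIoo.prod hIoo)).inter
      rw [Set.setOf_and]
      exact (measurableSet_le measurable_snd.snd ((hGmeas a).comp measurable_snd.fst)).inter
        (measurableSet_le measurable_snd.fst ((hGmeas b).comp measurable_fst))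
    have hprod : (π.prod (π.prod π)) ((Ioo (0:ℝ) 1 ×ˢ (Ioo (0:ℝ) 1 ×ˢ Ioo (0:ℝ) 1)) ∩
        {p : ℝ × ℝ × ℝ | p.2.2 ≤ deriv (K.C a) p.2.1 ∧ p.2.1 ≤ deriv (K.C b) p.1})
        = ∫⁻ z, ENNReal.ofReal (ψ z) ∂π := by
      rw [Measure.prod_apply hM1]
      refine lintegral_congr_ae ?_
      filter_upwards [haeπ] with z hz
      have hzb : deriv (K.C b) z ∈ Icc (0:ℝ) 1 := by
        rw [hG b hb z hz]
        exact hθmem b hb z hz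
      have hslice : Prod.mk z ⁻¹' ((Ioo (0:ℝ) 1 ×ˢ (Ioo (0:ℝ) 1 ×ˢ Ioo (0:ℝ) 1)) ∩
          {p : ℝ × ℝ × ℝ | p.2.2 ≤ deriv (K.C a) p.2.1 ∧ p.2.1 ≤ deriv (K.C b) p.1})
          = (Ioo (0:ℝ) 1 ×ˢ Ioo (0:ℝ) 1) ∩
            {q : ℝ × ℝ | q.2 ≤ deriv (K.C a) q.1 ∧ q.1 ≤ deriv (K.C b) z} := by
        ext q
        simp only [mem_preimage, mem_inter_iff, mem_prod, mem_setOf_eq]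
        tauto
      rw [hslice]
      have hs2 : MeasurableSet ((Ioo (0:ℝ) 1 ×ˢ Ioo (0:ℝ) 1) ∩
          {q : ℝ × ℝ | q.2 ≤ deriv (K.C a) q.1 ∧ q.1 ≤ deriv (K.C b) z}) := by
        apply (hIoo.prod hIoo).inter
        rw [Set.setOf_and]
        exact (measurableSet_le measurable_snd ((hGmeas a).comp measurable_fst)).inter
          (measurableSet_le measurable_fst measurable_const)
      rw [Measure.prod_apply hs2]
      have hin : (∫⁻ y, π (Prod.mk y ⁻¹' ((Ioo (0:ℝ) 1 ×ˢ Ioo (0:ℝ) 1) ∩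
            {q : ℝ × ℝ | q.2 ≤ deriv (K.C a) q.1 ∧ q.1 ≤ deriv (K.C b) z})) ∂π)
          = ∫⁻ y, (Iic (deriv (K.C b) z)).indicator
              (fun y' => ENNReal.ofReal (deriv (K.C a) y')) y ∂π := by
        refine lintegral_congr_ae ?_
        filter_upwards [haeπ] with y hy
        by_cases hyb : y ≤ deriv (K.C b) z
        · rw [indicator_of_mem (show y ∈ Iic (deriv (K.C b) z) from hyb)]
          have hya : deriv (K.C a) y ∈ Icc (0:ℝ) 1 := by
            rw [hG a ha y hy]
            exact hθmem a ha y hy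
          have hset2 : Prod.mk y ⁻¹' ((Ioo (0:ℝ) 1 ×ˢ Ioo (0:ℝ) 1) ∩
              {q : ℝ × ℝ | q.2 ≤ deriv (K.C a) q.1 ∧ q.1 ≤ deriv (K.C b) z})
              = Ioo (0:ℝ) 1 ∩ Iic (deriv (K.C a) y) := by
            ext x
            simp only [mem_preimage, mem_inter_iff, mem_prod, mem_setOf_eq, mem_Iic]
            constructor
            · rintro ⟨⟨_, hx⟩, hxa, _⟩
              exact ⟨hx, hxa⟩
            · rintro ⟨hx, hxa⟩
              exact ⟨⟨hy, hx⟩, hxa, hyb⟩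
          rw [hset2]
          have hII : π (Ioo (0:ℝ) 1 ∩ Iic (deriv (K.C a) y)) = π (Iic (deriv (K.C a) y)) := by
            rw [hπ, Measure.restrict_apply (hIoo.inter measurableSet_Iic),
              Measure.restrict_apply measurableSet_Iic]
            congr 1
            ext x
            simp only [mem_inter_iff, mem_Ioo, mem_Iic]
            tauto
          rw [hII, hIic _ hya]
        · rw [indicator_of_notMem (show y ∉ Iic (deriv (K.C b) z) from hyb)]
          have hset2 : Prod.mk y ⁻¹' ((Ioo (0:ℝ) 1 ×ˢ Ioo (0:ℝ) 1) ∩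
              {q : ℝ × ℝ | q.2 ≤ deriv (K.C a) q.1 ∧ q.1 ≤ deriv (K.C b) z})
              = (∅ : Set ℝ) := by
            ext x
            simp only [mem_preimage, mem_inter_iff, mem_prod, mem_setOf_eq,
              mem_empty_iff_false, iff_false]
            rintro ⟨-, -, h⟩
            exact hyb h
          rw [hset2, measure_empty]
      rw [hin, lintegral_indicator measurableSet_Iic _, hinner a ha _ hzb,
        hG b hb z hz, ← hψeq z hz]
    rw [hprod]
    haveI hπfin : IsFiniteMeasure π := by
      rw [hπ]
      exact ⟨by rw [Measure.restrict_apply_univ]; exact measure_Ioo_lt_top⟩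
    have hψint : Integrable ψ π :=
      ⟨hψmeas.aestronglyMeasurable, HasFiniteIntegral.of_bounded (C := 1)
        (Filter.Eventually.of_forall fun z => by
          rw [Real.norm_eq_abs, abs_of_nonneg (hψnn z)]
          exact hψle z)⟩
    rw [← ofReal_integral_eq_lintegral_ofReal hψint (Filter.Eventually.of_forall hψnn),
      ENNReal.toReal_ofReal (integral_nonneg hψnn),
      intervalIntegral.integral_of_le zero_le_one, hπ,
      ← Measure.restrict_congr_set Ioo_ae_eq_Ioc]
    refine integral_congr_ae ?_
    filter_upwards [ae_restrict_mem hIoo] with z hz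
    exact hψeq z hz
  · intro s t a b
    rw [key t a b, key s a b]
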